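/- arXiv:1001.1625 — 5 statements merged into one kernel-verified Lean document; each statement's English description precedes it below -/
import Mathlib

section
/- If the basis h_1, …, h_m is LLL-reduced with parameter δ ∈ (1/4, 1), then its first vector satisfies ‖h_1‖ ≤ α^{(m−1)/2} d_H, where d_H is the minimum distance of the lattice L(H) and α = 1/(δ − 1/4). -/
open scoped BigOperators

/-- Gram-Schmidt orthogonalization of the system of vectors `h`. -/
noncomputable def gso {n m : ℕ} (h : Fin m → EuclideanSpace ℝ (Fin n)) :
    Fin m → EuclideanSpace ℝ (Fin n) :=
  @InnerProductSpace.gramSchmidt ℝ (EuclideanSpace ℝ (Fin n)) _ _ _ (Fin m) _ _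
    (inferInstance : WellFoundedLT (Fin m)) h

/-- Gram-Schmidt coefficients `μ i j = ⟨h i, h* j⟩ / ‖h* j‖²`. -/
noncomputable def mu {n m : ℕ} (h : Fin m → EuclideanSpace ℝ (Fin n)) (i j : Fin m) : ℝ :=
  (inner ℝ (h i) (gso h j) : ℝ) / ‖gso h j‖ ^ 2

/-- The lattice generated by the vectors `h`. -/
def latticePts {n m : ℕ} (h : Fin m → EuclideanSpace ℝ (Fin n)) :
    Set (EuclideanSpace ℝ (Fin n)) :=
  {v | ∃ x : Fin m → ℤ, v = ∑ i, (x i : ℝ) • h i}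

/-- `a(H)`: the minimum norm of the Gram-Schmidt vectors. -/
noncomputable def aMin {n m : ℕ} (h : Fin m → EuclideanSpace ℝ (Fin n)) : ℝ :=
  ⨅ i, ‖gso h i‖

/-- `A(H)`: the maximum norm of the Gram-Schmidt vectors. -/
noncomputable def AMax {n m : ℕ} (h : Fin m → EuclideanSpace ℝ (Fin n)) : ℝ :=
  ⨆ i, ‖gso h i‖

/-- LLL-reducedness (size reduction + Lovász condition) with parameter `δ`. -/
def IsLLLReduced {n m : ℕ} (δ : ℝ) (h : Fin m → EuclideanSpace ℝ (Fin n)) : Prop :=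
  (∀ k l : Fin m, l < k → |mu h k l| ≤ 1 / 2) ∧
  (∀ k l : Fin m, (l : ℕ) + 1 = (k : ℕ) →
    δ * ‖gso h l‖ ^ 2 ≤ ‖gso h k + mu h k l • gso h l‖ ^ 2)

/-- Append the coordinate `c` to the vector `v`. -/
noncomputable def aug {n : ℕ} (v : EuclideanSpace ℝ (Fin n)) (c : ℝ) :
    EuclideanSpace ℝ (Fin (n + 1)) :=
  (WithLp.equiv 2 (Fin (n + 1) → ℝ)).symm (Fin.snoc ((WithLp.equiv 2 (Fin n → ℝ)) v) c)

/-- Columns of the augmented matrix `H̃`: the columns `(h i, 0)` followed by `(-y, t)`. -/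
noncomputable def augCols {n m : ℕ} (h : Fin m → EuclideanSpace ℝ (Fin n))
    (y : EuclideanSpace ℝ (Fin n)) (t : ℝ) : Fin (m + 1) → EuclideanSpace ℝ (Fin (n + 1)) :=
  Fin.snoc (fun i => aug (h i) 0) (aug (-y) t)

/-- `v` is a `γ`-unique shortest vector of the lattice `L`. -/
def IsUniqueShortest {N : ℕ} (L : Set (EuclideanSpace ℝ (Fin N))) (γ : ℝ)
    (v : EuclideanSpace ℝ (Fin N)) : Prop :=
  v ∈ L ∧ v ≠ 0 ∧ (∀ u ∈ L, u ≠ 0 → ‖v‖ ≤ ‖u‖) ∧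
    ∀ u ∈ L, ‖u‖ ≤ γ * ‖v‖ → ¬ LinearIndependent ℝ ![u, v]

lemma gso_eq {n m : ℕ} (h : Fin m → EuclideanSpace ℝ (Fin n)) :
    gso h = @InnerProductSpace.gramSchmidt ℝ (EuclideanSpace ℝ (Fin n)) _ _ _ (Fin m) _ _
      (inferInstance : WellFoundedLT (Fin m)) h := rfl

lemma gso_orth {n m : ℕ} (h : Fin m → EuclideanSpace ℝ (Fin n)) {i j : Fin m} (hij : i ≠ j) :
    (inner ℝ (gso h i) (gso h j) : ℝ) = 0 :=
  @InnerProductSpace.gramSchmidt_orthogonal ℝ _ _ _ _ (Fin m) _ _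
    (inferInstance : WellFoundedLT (Fin m)) h _ _ hij

lemma inner_h_gso_lt {n m : ℕ} (h : Fin m → EuclideanSpace ℝ (Fin n)) {i j : Fin m}
    (hij : i < j) : (inner ℝ (h i) (gso h j) : ℝ) = 0 := by
  rw [real_inner_comm]
  exact @InnerProductSpace.gramSchmidt_inv_triangular ℝ _ _ _ _ (Fin m) _ _
    (inferInstance : WellFoundedLT (Fin m)) h _ _ hij

lemma inner_h_gso_self {n m : ℕ} (h : Fin m → EuclideanSpace ℝ (Fin n)) (j : Fin m) :
    (inner ℝ (h j) (gso h j) : ℝ) = ‖gso h j‖ ^ 2 := by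
  have hdef := @InnerProductSpace.gramSchmidt_def'' ℝ _ _ _ _ (Fin m) _ _
    (inferInstance : WellFoundedLT (Fin m)) h j
  rw [real_inner_comm, gso_eq]
  conv_lhs => rw [hdef]
  rw [inner_add_right, inner_sum, real_inner_self_eq_norm_sq, add_eq_left]
  apply Finset.sum_eq_zero
  intro i hi
  rw [real_inner_smul_right,
    @InnerProductSpace.gramSchmidt_orthogonal ℝ _ _ _ _ (Fin m) _ _
      (inferInstance : WellFoundedLT (Fin m)) h j i (Finset.mem_Iio.mp hi).ne', mul_zero]

/-- for an LLL-reduced basis, `‖h_1‖ ≤ α^((m-1)/2) d_H`. -/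
theorem statement2 {n m : ℕ} (hm : 0 < m)
    (h : Fin m → EuclideanSpace ℝ (Fin n)) (hli : LinearIndependent ℝ h)
    (δ : ℝ) (hδ : δ ∈ Set.Ioo (1/4 : ℝ) 1)
    (hred : IsLLLReduced δ h)
    (α : ℝ) (hα : α = 1 / (δ - 1/4))
    (dH : ℝ) (hdH : IsLeast {r : ℝ | ∃ v ∈ latticePts h, v ≠ 0 ∧ ‖v‖ = r} dH) :
    ‖h ⟨0, hm⟩‖ ≤ α ^ (((m : ℝ) - 1) / 2) * dH := by
  classical
  obtain ⟨hδ1, hδ2⟩ := hδ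
  have hαpos : (0:ℝ) < δ - 1/4 := by linarith
  have hα1 : 1 < α := by
    rw [hα, lt_div_iff₀ hαpos]; linarith
  have hα0 : (0:ℝ) < α := by linarith
  obtain ⟨hdH_mem, hdH_lb⟩ := hdH
  obtain ⟨dv, ⟨x, hx⟩, hdv0, hdvn⟩ := hdH_mem
  set s : Finset (Fin m) := Finset.univ.filter (fun i => x i ≠ 0) with hs
  have hsne : s.Nonempty := by
    by_contra hse
    apply hdv0
    rw [hx]
    apply Finset.sum_eq_zero
    intro i _
    have hxi : x i = 0 := by
      by_contra hxi
      exact hse ⟨i, by simp [hs, hxi]⟩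
    simp [hxi]
  set j := s.max' hsne with hj
  have hxj : x j ≠ 0 := by
    have := s.max'_mem hsne; simpa [hs] using this
  have hgt : ∀ i : Fin m, j < i → x i = 0 := by
    intro i hi
    by_contra hxi
    exact absurd (s.le_max' i (by simp [hs, hxi])) (not_le.mpr hi)
  have hinner : (inner ℝ dv (gso h j) : ℝ) = (x j : ℝ) * ‖gso h j‖ ^ 2 := by
    rw [hx, sum_inner, Finset.sum_eq_single j]
    · rw [real_inner_smul_left, inner_h_gso_self]
    · intro i _ hij
      rcases lt_or_gt_of_ne hij with hlt | hgt'
      · rw [real_inner_smul_left, inner_h_gso_lt h hlt, mul_zero]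
      · rw [hgt i hgt']; simp
    · intro hji; exact absurd (Finset.mem_univ j) hji
  have hgj0 : gso h j ≠ 0 := by
    rw [gso_eq]
    exact @InnerProductSpace.gramSchmidt_ne_zero ℝ _ _ _ _ (Fin m) _ _
      (inferInstance : WellFoundedLT (Fin m)) h j hli
  have hgjpos : 0 < ‖gso h j‖ := norm_pos_iff.mpr hgj0
  have hxj1 : (1:ℝ) ≤ |(x j : ℝ)| := by
    rw [← Int.cast_abs]; exact_mod_cast Int.one_le_abs hxj
  have hcs : |(inner ℝ dv (gso h j) : ℝ)| ≤ ‖dv‖ * ‖gso h j‖ := abs_real_inner_le_norm _ _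
  have hkey : ‖gso h j‖ ≤ dH := by
    rw [← hdvn]
    rw [hinner, abs_mul, abs_pow, abs_norm] at hcs
    nlinarith
  have hdHpos : 0 < dH := lt_of_lt_of_le hgjpos hkey
  have hstep : ∀ k : ℕ, ∀ hk1 : k + 1 < m,
      ‖gso h ⟨k, Nat.lt_of_succ_lt hk1⟩‖ ^ 2 ≤ α * ‖gso h ⟨k+1, hk1⟩‖ ^ 2 := by
    intro k hk1
    set l : Fin m := ⟨k, Nat.lt_of_succ_lt hk1⟩ with hl
    set k' : Fin m := ⟨k+1, hk1⟩ with hk'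
    have hlov := hred.2 k' l rfl
    have hsize := hred.1 k' l (by simp [Fin.lt_def, hl, hk'])
    have horth : (inner ℝ (gso h k') (gso h l) : ℝ) = 0 :=
      gso_orth h (Fin.ne_of_val_ne (by simp [hl, hk']))
    have hexp : ‖gso h k' + mu h k' l • gso h l‖ ^ 2
        = ‖gso h k'‖ ^ 2 + (mu h k' l) ^ 2 * ‖gso h l‖ ^ 2 := by
      rw [norm_add_sq_real, real_inner_smul_right, horth, norm_smul, Real.norm_eq_abs,
        mul_pow, sq_abs]
      ring
    rw [hexp] at hlov
    have hmusq : (mu h k' l) ^ 2 ≤ 1/4 := by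
      nlinarith [sq_abs (mu h k' l), abs_nonneg (mu h k' l)]
    rw [hα, div_mul_eq_mul_div, one_mul, le_div_iff₀ hαpos]
    nlinarith [sq_nonneg ‖gso h l‖]
  have hchain : ∀ k : ℕ, ∀ hk : k < m, ‖gso h ⟨0, hm⟩‖ ^ 2 ≤ α ^ k * ‖gso h ⟨k, hk⟩‖ ^ 2 := by
    intro k
    induction k with
    | zero => intro hk; simp
    | succ k ih =>
      intro hk
      have hkm := Nat.lt_of_succ_lt hk
      calc ‖gso h ⟨0, hm⟩‖ ^ 2 ≤ α ^ k * ‖gso h ⟨k, hkm⟩‖ ^ 2 := ih hkm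
        _ ≤ α ^ k * (α * ‖gso h ⟨k+1, hk⟩‖ ^ 2) :=
            mul_le_mul_of_nonneg_left (hstep k hk) (pow_nonneg hα0.le k)
        _ = α ^ (k+1) * ‖gso h ⟨k+1, hk⟩‖ ^ 2 := by ring
  have h0eq : gso h ⟨0, hm⟩ = h ⟨0, hm⟩ := by
    have hdef := @InnerProductSpace.gramSchmidt_def ℝ _ _ _ _ (Fin m) _ _
      (inferInstance : WellFoundedLT (Fin m)) h ⟨0, hm⟩
    have hIio : Finset.Iio (⟨0, hm⟩ : Fin m) = ∅ := by
      ext i; simp [Fin.lt_def]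
    rw [hIio, Finset.sum_empty, sub_zero] at hdef
    exact hdef
  have hsq : ‖h ⟨0, hm⟩‖ ^ 2 ≤ α ^ (m-1) * dH ^ 2 := by
    have h1 : ‖h ⟨0, hm⟩‖ ^ 2 ≤ α ^ (j : ℕ) * ‖gso h j‖ ^ 2 := by
      have := hchain (j : ℕ) j.2
      rw [Fin.eta] at this
      rw [← h0eq]
      exact this
    have h2 : ‖gso h j‖ ^ 2 ≤ dH ^ 2 := by nlinarith
    have h3 : α ^ (j : ℕ) ≤ α ^ (m-1) := pow_le_pow_right₀ hα1.le (by omega)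
    calc ‖h ⟨0, hm⟩‖ ^ 2 ≤ α ^ (j : ℕ) * ‖gso h j‖ ^ 2 := h1
      _ ≤ α ^ (j : ℕ) * dH ^ 2 :=
          mul_le_mul_of_nonneg_left h2 (pow_nonneg hα0.le _)
      _ ≤ α ^ (m-1) * dH ^ 2 := mul_le_mul_of_nonneg_right h3 (sq_nonneg dH)
  have hrw : Real.sqrt (α ^ (m-1)) = α ^ (((m:ℝ) - 1)/2) := by
    rw [Real.sqrt_eq_rpow, ← Real.rpow_natCast α (m-1), ← Real.rpow_mul hα0.le]
    congr 1
    rw [Nat.cast_sub hm]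
    push_cast
    ring
  calc ‖h ⟨0, hm⟩‖ = Real.sqrt (‖h ⟨0, hm⟩‖ ^ 2) := (Real.sqrt_sq (norm_nonneg _)).symm
    _ ≤ Real.sqrt (α ^ (m-1) * dH ^ 2) := Real.sqrt_le_sqrt hsq
    _ = Real.sqrt (α ^ (m-1)) * dH := by
        rw [Real.sqrt_mul (pow_nonneg hα0.le _), Real.sqrt_sq hdHpos.le]
    _ = α ^ (((m:ℝ) - 1)/2) * dH := by rw [hrw]
end

section
/- Let H ∈ M_{n×m}(ℝ) have linearly independent columns, let x ∈ ℤ^m, y ∈ ℝ^n, and w = y − Hx. Let h′_1, …, h′_m be an LLL-reduced basis of L(H) with parameter δ ∈ (1/4, 1), α = 1/(δ − 1/4), and set t = ε a(H′) where 0 < ε ≤ 1/(2√2 · α^{m − 1/2}). If ‖w‖ ≤ ε d_H, then the vector v = (Hx − y, t) ∈ ℝ^{n+1} is an α^{m/2}-unique shortest vector of the augmented lattice L(H̃). -/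
open scoped BigOperators

/-! ### Auxiliary lemmas -/

section Aux

variable {n m : ℕ}

lemma aug_apply (v : EuclideanSpace ℝ (Fin n)) (c : ℝ) (i : Fin (n+1)) :
    aug v c i = Fin.snoc (α := fun _ => ℝ) v c i := rfl

lemma aug_add (a b : EuclideanSpace ℝ (Fin n)) (c d : ℝ) :
    aug a c + aug b d = aug (a + b) (c + d) := by
  ext i
  rw [PiLp.add_apply, aug_apply, aug_apply, aug_apply]
  refine Fin.lastCases ?_ (fun j => ?_) i
  · simp
  · simp [PiLp.add_apply]

lemma aug_smul (r : ℝ) (a : EuclideanSpace ℝ (Fin n)) (c : ℝ) :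
    r • aug a c = aug (r • a) (r * c) := by
  ext i
  rw [PiLp.smul_apply, aug_apply, aug_apply]
  refine Fin.lastCases ?_ (fun j => ?_) i
  · simp
  · simp [PiLp.smul_apply]

lemma aug_zero : aug (0 : EuclideanSpace ℝ (Fin n)) 0 = 0 := by
  ext i
  rw [aug_apply]
  refine Fin.lastCases ?_ (fun j => ?_) i
  · simp
  · simp [PiLp.zero_apply]

lemma aug_sum {ι : Type*} (s : Finset ι) (f : ι → EuclideanSpace ℝ (Fin n)) (g : ι → ℝ) :
    ∑ i ∈ s, aug (f i) (g i) = aug (∑ i ∈ s, f i) (∑ i ∈ s, g i) := by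
  classical
  induction s using Finset.induction_on with
  | empty => simpa using aug_zero.symm
  | insert _ _ hx ih =>
      rw [Finset.sum_insert hx, Finset.sum_insert hx, Finset.sum_insert hx, ih, aug_add]

lemma norm_aug_sq (a : EuclideanSpace ℝ (Fin n)) (c : ℝ) :
    ‖aug a c‖ ^ 2 = ‖a‖ ^ 2 + c ^ 2 := by
  rw [EuclideanSpace.norm_eq, EuclideanSpace.norm_eq, Real.sq_sqrt (by positivity),
    Real.sq_sqrt (by positivity)]
  rw [Fin.sum_univ_castSucc]
  simp [aug_apply]

lemma aug_ne_zero (a : EuclideanSpace ℝ (Fin n)) {c : ℝ} (hc : c ≠ 0) : aug a c ≠ 0 := by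
  intro h
  apply hc
  have := congrArg (fun f => f (Fin.last n)) h
  simpa [aug_apply] using this

lemma gso_orthogonal (h : Fin m → EuclideanSpace ℝ (Fin n)) {a b : Fin m} (hab : a ≠ b) :
    (inner ℝ (gso h a) (gso h b) : ℝ) = 0 :=
  @InnerProductSpace.gramSchmidt_orthogonal ℝ _ _ _ _ (Fin m) _ _ (inferInstance : WellFoundedLT (Fin m)) h a b hab

lemma gso_inv_triangular (h : Fin m → EuclideanSpace ℝ (Fin n)) {i j : Fin m} (hij : i < j) :
    (inner ℝ (gso h j) (h i) : ℝ) = 0 :=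
  @InnerProductSpace.gramSchmidt_inv_triangular ℝ _ _ _ _ (Fin m) _ _ (inferInstance : WellFoundedLT (Fin m)) h i j
    hij

lemma gso_ne_zero (h : Fin m → EuclideanSpace ℝ (Fin n)) (hli : LinearIndependent ℝ h)
    (i : Fin m) : gso h i ≠ 0 :=
  @InnerProductSpace.gramSchmidt_ne_zero ℝ _ _ _ _ (Fin m) _ _ (inferInstance : WellFoundedLT (Fin m)) h i hli

lemma gso_def'' (h : Fin m → EuclideanSpace ℝ (Fin n)) (k : Fin m) :
    h k = gso h k + ∑ i ∈ Finset.Iio k,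
      ((inner ℝ (gso h i) (h k) : ℝ) / (‖gso h i‖ : ℝ) ^ 2) • gso h i :=
  @InnerProductSpace.gramSchmidt_def'' ℝ _ _ _ _ (Fin m) _ _ (inferInstance : WellFoundedLT (Fin m)) h k

lemma inner_gso_self (h : Fin m → EuclideanSpace ℝ (Fin n)) (k : Fin m) :
    (inner ℝ (h k) (gso h k) : ℝ) = ‖gso h k‖ ^ 2 := by
  conv_lhs => rw [gso_def'' h k]
  rw [inner_add_left, real_inner_self_eq_norm_sq, sum_inner]
  have : ∀ i ∈ Finset.Iio k,
      (inner ℝ ((((inner ℝ (gso h i) (h k) : ℝ)) / (‖gso h i‖ : ℝ) ^ 2) • gso h i) (gso h k) : ℝ)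
        = 0 := by
    intro i hi
    rw [real_inner_smul_left, gso_orthogonal h (Finset.mem_Iio.1 hi).ne, mul_zero]
  rw [Finset.sum_congr rfl this, Finset.sum_const, smul_zero, add_zero, pow_two]

lemma inner_gso_of_lt (h : Fin m → EuclideanSpace ℝ (Fin n)) {i k : Fin m} (hik : i < k) :
    (inner ℝ (h i) (gso h k) : ℝ) = 0 := by
  rw [real_inner_comm]; exact gso_inv_triangular h hik

lemma aMin_le (h : Fin m → EuclideanSpace ℝ (Fin n)) (i : Fin m) : aMin h ≤ ‖gso h i‖ :=
  ciInf_le (Finite.bddBelow_range _) i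

lemma aMin_pos [NeZero m] (h : Fin m → EuclideanSpace ℝ (Fin n))
    (hli : LinearIndependent ℝ h) : 0 < aMin h := by
  obtain ⟨i, hi⟩ := Finite.exists_min (fun i => ‖gso h i‖)
  have h1 : ‖gso h i‖ ≤ aMin h := le_ciInf hi
  have h2 : gso h i ≠ 0 := gso_ne_zero h hli i
  calc (0:ℝ) < ‖gso h i‖ := norm_pos_iff.2 h2
    _ ≤ aMin h := h1

lemma aMin_le_norm_lattice [NeZero m] (h : Fin m → EuclideanSpace ℝ (Fin n))
    (hli : LinearIndependent ℝ h) (c : Fin m → ℤ) (hc : c ≠ 0) :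
    aMin h ≤ ‖∑ i, (c i : ℝ) • h i‖ := by
  classical
  have hne : (Finset.univ.filter (fun i => c i ≠ 0)).Nonempty := by
    obtain ⟨i, hi⟩ := Function.ne_iff.1 hc
    exact ⟨i, by simp only [Finset.mem_filter, Finset.mem_univ, true_and]; exact hi⟩
  set k := (Finset.univ.filter (fun i => c i ≠ 0)).max' hne with hk
  have hck : c k ≠ 0 := by
    have := (Finset.univ.filter (fun i => c i ≠ 0)).max'_mem hne
    simpa using this
  have hgt : ∀ i : Fin m, k < i → c i = 0 := by
    intro i hi
    by_contra hci
    exact absurd (Finset.le_max' _ i (by simp [hci])) (not_le.2 hi)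
  set v := ∑ i, (c i : ℝ) • h i with hv
  have hinner : (inner ℝ v (gso h k) : ℝ) = (c k : ℝ) * ‖gso h k‖ ^ 2 := by
    rw [hv, sum_inner]
    rw [Finset.sum_eq_single k]
    · rw [real_inner_smul_left, inner_gso_self]
    · intro i _ hik
      rcases lt_or_gt_of_ne hik with hlt | hgt'
      · rw [real_inner_smul_left, inner_gso_of_lt h hlt, mul_zero]
      · rw [hgt i hgt']; simp
    · intro habs; exact absurd (Finset.mem_univ k) habs
  have hcs : |(inner ℝ v (gso h k) : ℝ)| ≤ ‖v‖ * ‖gso h k‖ := abs_real_inner_le_norm v (gso h k)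
  have hgpos : 0 < ‖gso h k‖ := norm_pos_iff.2 (gso_ne_zero h hli k)
  have h1 : (1:ℝ) ≤ |(c k : ℝ)| := by
    have : (1:ℤ) ≤ |c k| := Int.one_le_abs hck
    exact_mod_cast this
  have : ‖gso h k‖ ^ 2 ≤ ‖v‖ * ‖gso h k‖ := by
    calc ‖gso h k‖ ^ 2 = 1 * ‖gso h k‖ ^ 2 := (one_mul _).symm
      _ ≤ |(c k : ℝ)| * ‖gso h k‖ ^ 2 := by nlinarith [sq_nonneg ‖gso h k‖]
      _ = |(inner ℝ v (gso h k) : ℝ)| := by rw [hinner, abs_mul, abs_pow, abs_norm]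
      _ ≤ ‖v‖ * ‖gso h k‖ := hcs
  have h2 : ‖gso h k‖ ≤ ‖v‖ := by
    nlinarith [hgpos]
  exact (aMin_le h k).trans h2

lemma gso_zero [NeZero m] (h : Fin m → EuclideanSpace ℝ (Fin n)) : gso h 0 = h 0 := by
  have hd := gso_def'' h 0
  have he : Finset.Iio (0 : Fin m) = ∅ := by
    apply Finset.eq_empty_of_forall_notMem
    intro i hi
    exact absurd (Finset.mem_Iio.1 hi) (by simp [Fin.le_zero_iff])
  rw [he, Finset.sum_empty, add_zero] at hd
  exact hd.symm

lemma lll_step (h : Fin m → EuclideanSpace ℝ (Fin n)) {δ : ℝ} (hred : IsLLLReduced δ h)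
    {l k : Fin m} (hlk : (l : ℕ) + 1 = (k : ℕ)) :
    (δ - 1/4) * ‖gso h l‖ ^ 2 ≤ ‖gso h k‖ ^ 2 := by
  have hlt : l < k := by
    rw [Fin.lt_iff_val_lt_val]; omega
  have h1 := hred.2 k l hlk
  have h2 := hred.1 k l hlt
  have hexp : ‖gso h k + mu h k l • gso h l‖ ^ 2
      = ‖gso h k‖ ^ 2 + (mu h k l) ^ 2 * ‖gso h l‖ ^ 2 := by
    rw [norm_add_sq_real, real_inner_smul_right, gso_orthogonal h hlt.ne', mul_zero, mul_zero,
      add_zero, norm_smul, Real.norm_eq_abs, mul_pow, sq_abs]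
  rw [hexp] at h1
  have hmu : (mu h k l) ^ 2 ≤ 1/4 := by
    have := abs_nonneg (mu h k l)
    nlinarith [sq_abs (mu h k l)]
  nlinarith [sq_nonneg ‖gso h l‖]

lemma gso_chain [NeZero m] (h : Fin m → EuclideanSpace ℝ (Fin n)) {δ : ℝ}
    (hred : IsLLLReduced δ h) (hδ4 : 1/4 < δ) (i : Fin m) :
    (δ - 1/4) ^ (i : ℕ) * ‖h 0‖ ^ 2 ≤ ‖gso h i‖ ^ 2 := by
  suffices H : ∀ j : ℕ, ∀ hj : j < m, (δ - 1/4) ^ j * ‖h 0‖ ^ 2 ≤ ‖gso h ⟨j, hj⟩‖ ^ 2 by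
    simpa using H i i.2
  intro j
  induction j with
  | zero =>
      intro hj
      have : (⟨0, hj⟩ : Fin m) = 0 := rfl
      rw [this, gso_zero, pow_zero, one_mul]
  | succ j ih =>
      intro hj
      have hj' : j < m := Nat.lt_of_succ_lt hj
      have hstep := lll_step h hred (l := ⟨j, hj'⟩) (k := ⟨j+1, hj⟩) rfl
      have hih := ih hj'
      have hpos : (0:ℝ) < δ - 1/4 := by linarith
      calc (δ - 1/4) ^ (j+1) * ‖h 0‖ ^ 2
          = (δ - 1/4) * ((δ - 1/4) ^ j * ‖h 0‖ ^ 2) := by ring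
        _ ≤ (δ - 1/4) * ‖gso h ⟨j, hj'⟩‖ ^ 2 := mul_le_mul_of_nonneg_left hih hpos.le
        _ ≤ ‖gso h ⟨j+1, hj⟩‖ ^ 2 := hstep

lemma norm_first_le [NeZero m] (h : Fin m → EuclideanSpace ℝ (Fin n)) {δ : ℝ}
    (hred : IsLLLReduced δ h) (hδ : δ ∈ Set.Ioo (1/4 : ℝ) 1) :
    ‖h 0‖ ^ 2 ≤ (1/(δ - 1/4)) ^ (m - 1) * (aMin h) ^ 2 := by
  obtain ⟨i, hi⟩ := Finite.exists_min (fun i => ‖gso h i‖)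
  have haMin : aMin h = ‖gso h i‖ := le_antisymm (aMin_le h i) (le_ciInf hi)
  have hpos : (0:ℝ) < δ - 1/4 := by linarith [hδ.1]
  have hchain := gso_chain h hred hδ.1 i
  have hα1 : (1:ℝ) ≤ 1/(δ - 1/4) := by
    rw [le_div_iff₀ hpos]; linarith [hδ.2]
  have h1 : ‖h 0‖ ^ 2 ≤ (1/(δ - 1/4)) ^ (i : ℕ) * ‖gso h i‖ ^ 2 := by
    rw [div_pow, one_pow, one_div, inv_mul_eq_div, le_div_iff₀ (by positivity)]
    calc ‖h 0‖ ^ 2 * (δ - 1/4) ^ (i:ℕ) = (δ - 1/4) ^ (i:ℕ) * ‖h 0‖ ^ 2 := by ring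
      _ ≤ ‖gso h i‖ ^ 2 := hchain
  have h2 : (1/(δ - 1/4)) ^ (i : ℕ) ≤ (1/(δ - 1/4)) ^ (m - 1) :=
    pow_le_pow_right₀ hα1 (by omega)
  calc ‖h 0‖ ^ 2 ≤ (1/(δ - 1/4)) ^ (i:ℕ) * ‖gso h i‖ ^ 2 := h1
    _ ≤ (1/(δ - 1/4)) ^ (m-1) * ‖gso h i‖ ^ 2 :=
        mul_le_mul_of_nonneg_right h2 (sq_nonneg _)
    _ = (1/(δ - 1/4)) ^ (m-1) * (aMin h) ^ 2 := by rw [haMin]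

lemma sum_aug_comb (h : Fin m → EuclideanSpace ℝ (Fin n)) (y : EuclideanSpace ℝ (Fin n)) (t : ℝ)
    (z : Fin (m+1) → ℤ) :
    ∑ i, (z i : ℝ) • augCols h y t i
      = aug ((∑ i, (z i.castSucc : ℝ) • h i) - (z (Fin.last m) : ℝ) • y)
          ((z (Fin.last m) : ℝ) * t) := by
  rw [Fin.sum_univ_castSucc]
  have h1 : ∀ i : Fin m, (z i.castSucc : ℝ) • augCols h y t i.castSucc
      = aug ((z i.castSucc : ℝ) • h i) 0 := by
    intro i
    have : augCols h y t i.castSucc = aug (h i) 0 := by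
      rw [augCols, Fin.snoc_castSucc]
    rw [this, aug_smul, mul_zero]
  have h2 : augCols h y t (Fin.last m) = aug (-y) t := by
    rw [augCols, Fin.snoc_last]
  rw [Finset.sum_congr rfl (fun i _ => h1 i), h2, aug_sum, aug_smul, aug_add, smul_neg,
    Finset.sum_const, smul_zero, zero_add, ← sub_eq_add_neg]

lemma mem_augLattice_iff (h : Fin m → EuclideanSpace ℝ (Fin n)) (y : EuclideanSpace ℝ (Fin n))
    (t : ℝ) (u : EuclideanSpace ℝ (Fin (n+1))) :
    u ∈ latticePts (augCols h y t) ↔ ∃ (c : Fin m → ℤ) (q : ℤ),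
      u = aug ((∑ i, (c i : ℝ) • h i) - (q : ℝ) • y) ((q : ℝ) * t) := by
  constructor
  · rintro ⟨z, rfl⟩
    exact ⟨fun i => z i.castSucc, z (Fin.last m), sum_aug_comb h y t z⟩
  · rintro ⟨c, q, rfl⟩
    refine ⟨Fin.snoc c q, ?_⟩
    rw [sum_aug_comb]
    simp [Fin.snoc_castSucc, Fin.snoc_last]

end Aux

set_option maxHeartbeats 2000000 in
/-- if `t = ε a(H')` with `0 < ε ≤ 1/(2√2 α^(m-1/2))` and `‖w‖ ≤ ε d_H`, then
`v = (Hx - y, t)` is an `α^(m/2)`-unique shortest vector of the augmented lattice `L(H̃)`. -/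
theorem statement4 {n m : ℕ} (hm : 0 < m)
    (h : Fin m → EuclideanSpace ℝ (Fin n)) (hli : LinearIndependent ℝ h)
    (x : Fin m → ℤ) (y : EuclideanSpace ℝ (Fin n))
    (h' : Fin m → EuclideanSpace ℝ (Fin n)) (hli' : LinearIndependent ℝ h')
    (hsame : latticePts h' = latticePts h)
    (δ : ℝ) (hδ : δ ∈ Set.Ioo (1/4 : ℝ) 1)
    (hred : IsLLLReduced δ h')
    (α : ℝ) (hα : α = 1 / (δ - 1/4))
    (dH : ℝ) (hdH : IsLeast {r : ℝ | ∃ v ∈ latticePts h, v ≠ 0 ∧ ‖v‖ = r} dH)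
    (ε t : ℝ) (hε0 : 0 < ε) (hε : ε ≤ 1 / (2 * Real.sqrt 2 * α ^ ((m : ℝ) - 1/2)))
    (ht : t = ε * aMin h')
    (hw : ‖y - ∑ i, (x i : ℝ) • h i‖ ≤ ε * dH) :
    IsUniqueShortest (latticePts (augCols h y t)) (α ^ ((m : ℝ) / 2))
      (aug (∑ i, (x i : ℝ) • h i - y) t) := by
  haveI : NeZero m := ⟨hm.ne'⟩
  set w : EuclideanSpace ℝ (Fin n) := y - ∑ i, (x i : ℝ) • h i with hw_def
  set v : EuclideanSpace ℝ (Fin (n+1)) := aug (∑ i, (x i : ℝ) • h i - y) t with hv_def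
  set a : ℝ := aMin h' with ha_def
  set γ : ℝ := α ^ ((m : ℝ) / 2) with hγ_def
  set B : ℝ := α ^ ((m : ℝ) - 1/2) with hB_def
  have hδ1 : (1:ℝ)/4 < δ := hδ.1
  have hδ2 : δ < 1 := hδ.2
  have hβpos : (0:ℝ) < δ - 1/4 := by linarith only [hδ1]
  have hα_pos : 0 < α := by rw [hα]; positivity
  have hα1 : (1:ℝ) ≤ α := by rw [hα, le_div_iff₀ hβpos]; linarith only [hδ2]
  have ha_pos : 0 < a := aMin_pos h' hli'
  have ht_pos : 0 < t := by rw [ht]; positivity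
  have hm1R : (1:ℝ) ≤ (m:ℝ) := by exact_mod_cast hm
  -- basic facts about dH
  obtain ⟨v0, hv0mem, hv0ne, hv0norm⟩ := hdH.1
  have hdH_pos : 0 < dH := hv0norm ▸ norm_pos_iff.2 hv0ne
  have hdH_lb : ∀ u ∈ latticePts h, u ≠ 0 → dH ≤ ‖u‖ := fun u hu hne => hdH.2 ⟨u, hu, hne, rfl⟩
  have haMin_dH : a ≤ dH := by
    rw [← hsame] at hv0mem
    obtain ⟨c, hc⟩ := hv0mem
    have hcne : c ≠ 0 := by
      rintro rfl
      apply hv0ne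
      rw [hc]
      simp
    calc a ≤ ‖∑ i, (c i : ℝ) • h' i‖ := aMin_le_norm_lattice h' hli' c hcne
      _ = dH := by rw [← hc, hv0norm]
  -- dH² ≤ α^(m-1) a²
  have hdH_sq : dH ^ 2 ≤ α ^ (m - 1 : ℕ) * a ^ 2 := by
    have h0mem : h' 0 ∈ latticePts h := by
      rw [← hsame]
      refine ⟨fun j => if j = 0 then 1 else 0, ?_⟩
      rw [Finset.sum_eq_single 0]
      · simp
      · intro b _ hb; simp [hb]
      · intro habs; exact absurd (Finset.mem_univ 0) habs
    have h0ne : h' 0 ≠ 0 := hli'.ne_zero 0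
    have h1 : dH ≤ ‖h' 0‖ := hdH_lb _ h0mem h0ne
    have h2 := norm_first_le h' hred hδ
    rw [← hα] at h2
    calc dH ^ 2 ≤ ‖h' 0‖ ^ 2 := pow_le_pow_left₀ hdH_pos.le h1 2
      _ ≤ α ^ (m - 1 : ℕ) * a ^ 2 := h2
  -- norm of v
  have hsub_w : ∑ i, (x i : ℝ) • h i - y = -w := by rw [hw_def]; abel
  have hv_sq : ‖v‖ ^ 2 = ‖w‖ ^ 2 + t ^ 2 := by
    rw [hv_def, norm_aug_sq, hsub_w, norm_neg]
  have hw_le : ‖w‖ ≤ ε * dH := hw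
  have hv_sq_le : ‖v‖ ^ 2 ≤ 2 * ε ^ 2 * dH ^ 2 := by
    have h1 : t ≤ ε * dH := by
      rw [ht]
      exact mul_le_mul_of_nonneg_left haMin_dH hε0.le
    nlinarith only [norm_nonneg w, ht_pos.le, hw_le, h1, hv_sq]
  -- rpow arithmetic
  have hγ2 : γ ^ 2 = α ^ (m : ℝ) := by
    rw [hγ_def, ← Real.rpow_natCast (α ^ ((m:ℝ)/2)) 2, ← Real.rpow_mul hα_pos.le]
    congr 1
    push_cast
    ring
  have hB2 : B ^ 2 = α ^ (2 * (m : ℝ) - 1) := by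
    rw [hB_def, ← Real.rpow_natCast (α ^ ((m:ℝ) - 1/2)) 2, ← Real.rpow_mul hα_pos.le]
    congr 1
    push_cast
    ring
  have hm1C : (α : ℝ) ^ (m - 1 : ℕ) = α ^ ((m : ℝ) - 1) := by
    rw [← Real.rpow_natCast α (m - 1)]
    congr 1
    push_cast [Nat.cast_sub hm]
    ring
  have hprod : γ ^ 2 * α ^ ((m : ℝ) - 1) = B ^ 2 := by
    rw [hγ2, hB2, ← Real.rpow_add hα_pos]
    congr 1
    ring
  have hγB : γ ^ 2 ≤ B ^ 2 := by
    rw [hγ2, hB2]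
    exact Real.rpow_le_rpow_of_exponent_le hα1 (by linarith only [hm1R])
  have hγpos : 0 < γ := Real.rpow_pos_of_pos hα_pos _
  have hγ1 : (1:ℝ) ≤ γ := by
    rw [hγ_def]
    calc (1:ℝ) = α ^ (0:ℝ) := (Real.rpow_zero α).symm
      _ ≤ α ^ ((m:ℝ)/2) := Real.rpow_le_rpow_of_exponent_le hα1 (by linarith only [hm1R])
  have hBpos : 0 < B := Real.rpow_pos_of_pos hα_pos _
  -- ε² * 8B² ≤ 1
  have hε1 : ε * (2 * Real.sqrt 2 * B) ≤ 1 := by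
    rw [← le_div_iff₀ (by positivity)]
    exact hε
  have hs2 : Real.sqrt 2 ^ 2 = 2 := Real.sq_sqrt (by norm_num)
  have hε2 : ε ^ 2 * (8 * B ^ 2) ≤ 1 := by
    have h0 : 0 ≤ ε * (2 * Real.sqrt 2 * B) := by positivity
    have hsq : (ε * (2 * Real.sqrt 2 * B)) * (ε * (2 * Real.sqrt 2 * B)) ≤ 1 * 1 :=
      mul_le_mul hε1 hε1 h0 zero_le_one
    have hexp : (ε * (2 * Real.sqrt 2 * B)) * (ε * (2 * Real.sqrt 2 * B))
        = ε ^ 2 * (4 * Real.sqrt 2 ^ 2 * B ^ 2) := by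
      ring
    rw [hexp, hs2] at hsq
    linarith only [hsq]
  -- key bounds
  have key1 : γ * ‖v‖ ≤ dH / 2 := by
    have hsq : (γ * ‖v‖) ^ 2 ≤ (dH / 2) ^ 2 := by
      have c1 : (γ * ‖v‖) ^ 2 ≤ γ ^ 2 * (2 * ε ^ 2 * dH ^ 2) := by
        calc (γ * ‖v‖) ^ 2 = γ ^ 2 * ‖v‖ ^ 2 := by ring
          _ ≤ γ ^ 2 * (2 * ε ^ 2 * dH ^ 2) := mul_le_mul_of_nonneg_left hv_sq_le (sq_nonneg γ)
      have c2 : γ ^ 2 * (2 * ε ^ 2 * dH ^ 2) ≤ B ^ 2 * (2 * ε ^ 2 * dH ^ 2) :=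
        mul_le_mul_of_nonneg_right hγB (by positivity)
      have c3 : B ^ 2 * (2 * ε ^ 2 * dH ^ 2) ≤ dH ^ 2 / 4 := by
        nlinarith only [hε2, sq_nonneg dH]
      calc (γ * ‖v‖) ^ 2 ≤ B ^ 2 * (2 * ε ^ 2 * dH ^ 2) := c1.trans c2
        _ ≤ dH ^ 2 / 4 := c3
        _ = (dH / 2) ^ 2 := by ring
    exact le_of_pow_le_pow_left₀ two_ne_zero (by positivity) hsq
  have key2 : γ * ‖v‖ ≤ a / 2 := by
    have hsq : (γ * ‖v‖) ^ 2 ≤ (a / 2) ^ 2 := by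
      have c1 : (γ * ‖v‖) ^ 2 ≤ γ ^ 2 * (2 * ε ^ 2 * dH ^ 2) := by
        calc (γ * ‖v‖) ^ 2 = γ ^ 2 * ‖v‖ ^ 2 := by ring
          _ ≤ γ ^ 2 * (2 * ε ^ 2 * dH ^ 2) := mul_le_mul_of_nonneg_left hv_sq_le (sq_nonneg γ)
      have c2 : γ ^ 2 * (2 * ε ^ 2 * dH ^ 2) ≤ 2 * ε ^ 2 * (γ ^ 2 * (α ^ ((m:ℝ) - 1) * a ^ 2)) := by
        rw [← hm1C]
        nlinarith only [hdH_sq, sq_nonneg (ε * γ)]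
      have c3 : γ ^ 2 * (α ^ ((m:ℝ) - 1) * a ^ 2) = B ^ 2 * a ^ 2 := by
        rw [← hprod]; ring
      have c4 : 2 * ε ^ 2 * (B ^ 2 * a ^ 2) ≤ a ^ 2 / 4 := by
        nlinarith only [hε2, sq_nonneg a]
      calc (γ * ‖v‖) ^ 2 ≤ 2 * ε ^ 2 * (γ ^ 2 * (α ^ ((m:ℝ) - 1) * a ^ 2)) := c1.trans c2
        _ = 2 * ε ^ 2 * (B ^ 2 * a ^ 2) := by rw [c3]
        _ ≤ a ^ 2 / 4 := c4
        _ = (a / 2) ^ 2 := by ring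
    exact le_of_pow_le_pow_left₀ two_ne_zero (by positivity) hsq
  -- the master case analysis
  have master : ∀ u ∈ latticePts (augCols h y t),
      (∃ q : ℤ, u = (q : ℝ) • v) ∨ γ * ‖v‖ < ‖u‖ := by
    intro u hu
    obtain ⟨c, q, rfl⟩ := (mem_augLattice_iff h y t u).1 hu
    set c' : Fin m → ℤ := c - q • x with hc'_def
    have hsum : ∑ i, ((c' i : ℝ)) • h i
        = (∑ i, (c i : ℝ) • h i) - (q : ℝ) • ∑ i, (x i : ℝ) • h i := by
      rw [Finset.smul_sum, ← Finset.sum_sub_distrib]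
      refine Finset.sum_congr rfl fun i _ => ?_
      have : (c' i : ℝ) = (c i : ℝ) - (q : ℝ) * (x i : ℝ) := by
        rw [hc'_def]
        push_cast [Pi.sub_apply, Pi.smul_apply, smul_eq_mul]
        ring
      rw [this, sub_smul, smul_smul]
    have hP : (∑ i, (c i : ℝ) • h i) - (q : ℝ) • y
        = (∑ i, (c' i : ℝ) • h i) - (q : ℝ) • w := by
      rw [hsum, hw_def, smul_sub]
      abel
    have hnu : ‖aug ((∑ i, (c i : ℝ) • h i) - (q : ℝ) • y) ((q : ℝ) * t)‖ ^ 2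
        = ‖(∑ i, (c' i : ℝ) • h i) - (q : ℝ) • w‖ ^ 2 + ((q : ℝ) * t) ^ 2 := by
      rw [hP, norm_aug_sq]
    by_cases hq : q = 0
    · subst hq
      by_cases hc0 : c = 0
      · left
        refine ⟨0, ?_⟩
        subst hc0
        simp [aug_zero]
      · right
        have hc'c : c' = c := by rw [hc'_def]; simp
        have hne : ∑ i, (c' i : ℝ) • h i ≠ 0 := by
          intro h0
          apply hc0
          rw [← hc'c]
          have := Fintype.linearIndependent_iff.1 hli (fun i => (c' i : ℝ)) h0
          funext i
          have h2 : ((c' i : ℝ)) = 0 := by simpa using this i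
          exact_mod_cast h2
        have hlb : dH ≤ ‖∑ i, (c' i : ℝ) • h i‖ := hdH_lb _ ⟨c', rfl⟩ hne
        have hnu' : ‖aug ((∑ i, (c i : ℝ) • h i) - ((0:ℤ) : ℝ) • y) (((0:ℤ) : ℝ) * t)‖ ^ 2
            = ‖∑ i, (c' i : ℝ) • h i‖ ^ 2 := by
          rw [hnu]
          norm_num
        have h1 : dH ≤ ‖aug ((∑ i, (c i : ℝ) • h i) - ((0:ℤ) : ℝ) • y) (((0:ℤ) : ℝ) * t)‖ := by
          refine le_of_pow_le_pow_left₀ two_ne_zero (norm_nonneg _) ?_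
          rw [hnu']
          exact pow_le_pow_left₀ hdH_pos.le hlb 2
        calc γ * ‖v‖ ≤ dH / 2 := key1
          _ < dH := by linarith only [hdH_pos]
          _ ≤ _ := h1
    · by_cases hc0 : c' = 0
      · left
        refine ⟨q, ?_⟩
        have : (∑ i, (c i : ℝ) • h i) - (q : ℝ) • y = (q : ℝ) • (∑ i, (x i : ℝ) • h i - y) := by
          rw [hP, hc0]
          have hz : ∑ i, (((0 : Fin m → ℤ) i : ℝ)) • h i = 0 := by
            simp
          rw [hz, hsub_w, zero_sub, smul_neg]
        rw [hv_def, aug_smul, ← this]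
      · right
        have hne : ∑ i, (c' i : ℝ) • h i ≠ 0 := by
          intro h0
          apply hc0
          have := Fintype.linearIndependent_iff.1 hli (fun i => (c' i : ℝ)) h0
          funext i
          have h2 : ((c' i : ℝ)) = 0 := by simpa using this i
          exact_mod_cast h2
        have hlb : dH ≤ ‖∑ i, (c' i : ℝ) • h i‖ := hdH_lb _ ⟨c', rfl⟩ hne
        have hqR : ((q : ℝ)) ≠ 0 := Int.cast_ne_zero.2 hq
        have hq1 : (1:ℝ) ≤ |(q : ℝ)| := by
          have : (1:ℤ) ≤ |q| := Int.one_le_abs hq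
          exact_mod_cast this
        have hqt_pos : 0 < ((q : ℝ) * t) ^ 2 := by
          have hne' : (q : ℝ) * t ≠ 0 := mul_ne_zero hqR ht_pos.ne'
          positivity
        by_cases hqe : |(q : ℝ)| * ε ≤ 1/2
        · -- small q
          have h3 : dH - |(q : ℝ)| * ‖w‖ ≤ ‖(∑ i, (c' i : ℝ) • h i) - (q : ℝ) • w‖ := by
            have htri := norm_sub_norm_le (∑ i, (c' i : ℝ) • h i) ((q : ℝ) • w)
            rw [norm_smul, Real.norm_eq_abs] at htri
            linarith only [htri, hlb]
          have h4 : dH / 2 ≤ ‖(∑ i, (c' i : ℝ) • h i) - (q : ℝ) • w‖ := by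
            have h5 : |(q : ℝ)| * ‖w‖ ≤ |(q : ℝ)| * (ε * dH) :=
              mul_le_mul_of_nonneg_left hw_le (abs_nonneg _)
            have h6 : |(q : ℝ)| * (ε * dH) ≤ dH / 2 := by
              nlinarith only [hqe, hdH_pos.le]
            linarith only [h3, h5, h6]
          have hstrict : (γ * ‖v‖) ^ 2
              < ‖aug ((∑ i, (c i : ℝ) • h i) - (q : ℝ) • y) ((q : ℝ) * t)‖ ^ 2 := by
            rw [hnu]
            have h7 : (γ * ‖v‖) ^ 2 ≤ (dH / 2) ^ 2 :=
              pow_le_pow_left₀ (by positivity) key1 2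
            have h8 : (dH / 2) ^ 2 ≤ ‖(∑ i, (c' i : ℝ) • h i) - (q : ℝ) • w‖ ^ 2 :=
              pow_le_pow_left₀ (by positivity) h4 2
            linarith only [h7, h8, hqt_pos]
          exact lt_of_pow_lt_pow_left₀ 2 (norm_nonneg _) hstrict
        · -- big q
          push_neg at hqe
          have habs : ((q : ℝ) * t) ^ 2 = (|(q : ℝ)| * ε) ^ 2 * a ^ 2 := by
            have h11 : (|(q : ℝ)| * ε) ^ 2 = (q : ℝ) ^ 2 * ε ^ 2 := by
              rw [mul_pow, sq_abs]
            rw [h11, ht]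
            ring
          have h9 : a ^ 2 / 4 < ((q : ℝ) * t) ^ 2 := by
            rw [habs]
            have h10 : (1:ℝ)/4 < (|(q : ℝ)| * ε) ^ 2 := by
              nlinarith only [hqe, abs_nonneg (q : ℝ), hε0]
            nlinarith only [h10, pow_pos ha_pos 2]
          have hstrict : (γ * ‖v‖) ^ 2
              < ‖aug ((∑ i, (c i : ℝ) • h i) - (q : ℝ) • y) ((q : ℝ) * t)‖ ^ 2 := by
            rw [hnu]
            have h7 : (γ * ‖v‖) ^ 2 ≤ (a / 2) ^ 2 :=
              pow_le_pow_left₀ (by positivity) key2 2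
            have h8 : (0:ℝ) ≤ ‖(∑ i, (c' i : ℝ) • h i) - (q : ℝ) • w‖ ^ 2 := sq_nonneg _
            linarith only [h7, h8, h9]
          exact lt_of_pow_lt_pow_left₀ 2 (norm_nonneg _) hstrict
  -- conclusion
  have hv_mem : v ∈ latticePts (augCols h y t) := by
    rw [mem_augLattice_iff]
    refine ⟨x, 1, ?_⟩
    rw [hv_def]
    norm_num
  have hv_ne : v ≠ 0 := by
    rw [hv_def]
    exact aug_ne_zero _ ht_pos.ne'
  refine ⟨hv_mem, hv_ne, ?_, ?_⟩
  · intro u hu hune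
    rcases master u hu with ⟨q, rfl⟩ | hlt
    · have hq : q ≠ 0 := by
        rintro rfl
        simp at hune
      have hq1 : (1:ℝ) ≤ |(q : ℝ)| := by
        have : (1:ℤ) ≤ |q| := Int.one_le_abs hq
        exact_mod_cast this
      rw [norm_smul, Real.norm_eq_abs]
      nlinarith only [hq1, norm_nonneg v]
    · calc ‖v‖ = 1 * ‖v‖ := (one_mul _).symm
        _ ≤ γ * ‖v‖ := mul_le_mul_of_nonneg_right hγ1 (norm_nonneg v)
        _ ≤ ‖u‖ := hlt.le
  · intro u hu hle
    rcases master u hu with ⟨q, rfl⟩ | hlt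
    · intro hLI
      have h0 : (1:ℝ) • ((q : ℝ) • v) + (-(q:ℝ)) • v = 0 := by
        rw [one_smul, neg_smul]
        abel
      have := Fintype.linearIndependent_iff.1 hLI ![1, -(q:ℝ)] ?_ 0
      · norm_num at this
      · rw [Fin.sum_univ_two]
        simpa using h0
    · exact absurd hle (not_le.2 hlt)
end

section
/- Let H ∈ M_{n×m}(ℝ) have linearly independent columns, x ∈ ℤ^m, y ∈ ℝ^n, w = y − Hx, t > 0, and set v = (Hx − y, t) ∈ ℝ^{n+1}. If u = (Hx′ − q y, q t) ∈ L(H̃) (with x′ ∈ ℤ^m, q ∈ ℤ) satisfies ‖u‖ ≤ α^{m/2} ‖v‖ for some α > 0, then ‖Hx′ − q·Hx‖ ≤ α^{m/2} √(‖w‖² + t²) · (1 + ‖w‖/t). -/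
open scoped BigOperators

lemma aug_norm_sq {n : ℕ} (v : EuclideanSpace ℝ (Fin n)) (c : ℝ) :
    ‖aug v c‖ ^ 2 = ‖v‖ ^ 2 + c ^ 2 := by
  have h1 : ‖aug v c‖ ^ 2 = ∑ i, (aug v c i) ^ 2 := by
    rw [EuclideanSpace.norm_eq, Real.sq_sqrt (by positivity)]
    simp [sq_abs]
  have h2 : ‖v‖ ^ 2 = ∑ i, (v i) ^ 2 := by
    rw [EuclideanSpace.norm_eq, Real.sq_sqrt (by positivity)]
    simp [sq_abs]
  rw [h1, h2, Fin.sum_univ_castSucc]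
  simp [aug]

/-- if `u = (Hx' - q y, q t)` satisfies `‖u‖ ≤ α^(m/2) ‖v‖` where
`v = (Hx - y, t)`, then `‖Hx' - q·Hx‖ ≤ α^(m/2) √(‖w‖² + t²) (1 + ‖w‖/t)`. -/
theorem statement5 {n m : ℕ}
    (h : Fin m → EuclideanSpace ℝ (Fin n)) (hli : LinearIndependent ℝ h)
    (x x' : Fin m → ℤ) (q : ℤ) (y : EuclideanSpace ℝ (Fin n))
    (t : ℝ) (ht : 0 < t) (α : ℝ) (hα : 0 < α)
    (hu : ‖aug ((∑ i, (x' i : ℝ) • h i) - (q : ℝ) • y) ((q : ℝ) * t)‖ ≤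
      α ^ ((m : ℝ) / 2) * ‖aug ((∑ i, (x i : ℝ) • h i) - y) t‖) :
    ‖(∑ i, (x' i : ℝ) • h i) - (q : ℝ) • ∑ i, (x i : ℝ) • h i‖ ≤
      α ^ ((m : ℝ) / 2) * Real.sqrt (‖y - ∑ i, (x i : ℝ) • h i‖ ^ 2 + t ^ 2) *
        (1 + ‖y - ∑ i, (x i : ℝ) • h i‖ / t) := by
  set Hx := ∑ i, (x i : ℝ) • h i with hHx
  set Hx' := ∑ i, (x' i : ℝ) • h i with hHx'
  set w := y - Hx with hw
  set u := aug (Hx' - (q : ℝ) • y) ((q : ℝ) * t) with hudef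
  set v := aug (Hx - y) t with hvdef
  have hv_sq : ‖v‖ ^ 2 = ‖w‖ ^ 2 + t ^ 2 := by
    rw [hvdef, aug_norm_sq, hw, norm_sub_rev]
  have hv_eq : ‖v‖ = Real.sqrt (‖w‖ ^ 2 + t ^ 2) := by
    rw [← hv_sq, Real.sqrt_sq (norm_nonneg _)]
  have hu_sq : ‖u‖ ^ 2 = ‖Hx' - (q : ℝ) • y‖ ^ 2 + ((q : ℝ) * t) ^ 2 :=
    aug_norm_sq _ _
  have h1 : ‖Hx' - (q : ℝ) • y‖ ≤ ‖u‖ := by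
    have := sq_nonneg ((q : ℝ) * t)
    nlinarith [norm_nonneg u, norm_nonneg (Hx' - (q : ℝ) • y)]
  have h2 : |(q : ℝ)| * t ≤ ‖u‖ := by
    have : |(q : ℝ) * t| ≤ ‖u‖ := by
      have := sq_nonneg (‖Hx' - (q : ℝ) • y‖)
      nlinarith [norm_nonneg u, abs_nonneg ((q : ℝ) * t), sq_abs ((q : ℝ) * t)]
    rwa [abs_mul, abs_of_pos ht] at this
  have hqle : |(q : ℝ)| ≤ ‖u‖ / t := (le_div_iff₀ ht).mpr h2
  have htri : ‖Hx' - (q : ℝ) • Hx‖ ≤ ‖Hx' - (q : ℝ) • y‖ + |(q : ℝ)| * ‖w‖ := by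
    have : Hx' - (q : ℝ) • Hx = (Hx' - (q : ℝ) • y) + (q : ℝ) • w := by
      rw [hw]; module
    rw [this]
    calc ‖(Hx' - (q : ℝ) • y) + (q : ℝ) • w‖
        ≤ ‖Hx' - (q : ℝ) • y‖ + ‖(q : ℝ) • w‖ := norm_add_le _ _
      _ = ‖Hx' - (q : ℝ) • y‖ + |(q : ℝ)| * ‖w‖ := by
          rw [norm_smul, Real.norm_eq_abs]
  have hkey : ‖Hx' - (q : ℝ) • Hx‖ ≤ ‖u‖ * (1 + ‖w‖ / t) := by
    calc ‖Hx' - (q : ℝ) • Hx‖ ≤ ‖Hx' - (q : ℝ) • y‖ + |(q : ℝ)| * ‖w‖ := htri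
      _ ≤ ‖u‖ + (‖u‖ / t) * ‖w‖ := by gcongr
      _ = ‖u‖ * (1 + ‖w‖ / t) := by ring
  have hfac : (0 : ℝ) ≤ 1 + ‖w‖ / t := by positivity
  calc ‖Hx' - (q : ℝ) • Hx‖ ≤ ‖u‖ * (1 + ‖w‖ / t) := hkey
    _ ≤ (α ^ ((m : ℝ) / 2) * ‖v‖) * (1 + ‖w‖ / t) := by gcongr
    _ = α ^ ((m : ℝ) / 2) * Real.sqrt (‖w‖ ^ 2 + t ^ 2) * (1 + ‖w‖ / t) := by
        rw [hv_eq]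
end

section
/- Let H ∈ M_{n×m}(ℝ) have linearly independent columns h_1, …, h_m with Gram–Schmidt vectors h_1*, …, h_m*, let y ∈ ℝ^n, t > 0, and let H̃ be the augmented matrix. Then the Gram–Schmidt vectors h̃_1*, …, h̃_{m+1}* of the columns of H̃ satisfy h̃_i* = (h_i*, 0) for 1 ≤ i ≤ m, the last Gram–Schmidt vector h̃_{m+1}* has last coordinate equal to t (so ‖h̃_{m+1}*‖ ≥ t), and consequently a(H̃) ≥ min(t, a(H)). -/
open scoped BigOperators

namespace S11aux

lemma gso_def {n m : ℕ} (f : Fin m → EuclideanSpace ℝ (Fin n)) (i : Fin m) :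
    gso f i = f i - ∑ j ∈ Finset.Iio i,
      ((ℝ ∙ gso f j).starProjection (f i) : EuclideanSpace ℝ (Fin n)) := by
  unfold gso
  exact @InnerProductSpace.gramSchmidt_def ℝ _ _ _ _ (Fin m) _ _ (inferInstance : WellFoundedLT (Fin m)) f i

lemma aug_apply_castSucc {n : ℕ} (v : EuclideanSpace ℝ (Fin n)) (c : ℝ) (i : Fin n) :
    aug v c i.castSucc = v i := by
  simp [aug, Fin.snoc_castSucc]

lemma aug_apply_last {n : ℕ} (v : EuclideanSpace ℝ (Fin n)) (c : ℝ) :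
    aug v c (Fin.last n) = c := by
  simp [aug, Fin.snoc_last]

/-- `v ↦ (v, 0)` as a linear isometry. -/
noncomputable def augLI (n : ℕ) :
    EuclideanSpace ℝ (Fin n) →ₗᵢ[ℝ] EuclideanSpace ℝ (Fin (n + 1)) where
  toLinearMap :=
    { toFun := fun v => aug v 0
      map_add' := by
        intro u v
        ext i
        induction i using Fin.lastCases with
        | last => simp [aug_apply_last, PiLp.add_apply]
        | cast i => simp [aug_apply_castSucc, PiLp.add_apply]
      map_smul' := by
        intro c v
        ext i
        induction i using Fin.lastCases with
        | last => simp [aug_apply_last, PiLp.smul_apply]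
        | cast i => simp [aug_apply_castSucc, PiLp.smul_apply] }
  norm_map' := by
    intro v
    simp only [LinearMap.coe_mk, AddHom.coe_mk]
    rw [EuclideanSpace.norm_eq, EuclideanSpace.norm_eq]
    congr 1
    rw [Fin.sum_univ_castSucc]
    simp [aug_apply_castSucc, aug_apply_last]

lemma augLI_apply {n : ℕ} (v : EuclideanSpace ℝ (Fin n)) : augLI n v = aug v 0 := rfl

lemma sum_apply {N : ℕ} {κ : Type*} (s : Finset κ) (f : κ → EuclideanSpace ℝ (Fin N))
    (i : Fin N) : (∑ j ∈ s, f j) i = ∑ j ∈ s, f j i := by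
  classical
  induction s using Finset.induction with
  | empty => simp [PiLp.zero_apply]
  | insert a s hx ih => simp [Finset.sum_insert hx, PiLp.add_apply, ih]

lemma abs_apply_le_norm {N : ℕ} (x : EuclideanSpace ℝ (Fin N)) (i : Fin N) :
    |x i| ≤ ‖x‖ := by
  have h1 : |x i| = Real.sqrt (‖x i‖ ^ 2) := by
    rw [Real.sqrt_sq_eq_abs, Real.norm_eq_abs, abs_abs]
  rw [EuclideanSpace.norm_eq, h1]
  exact Real.sqrt_le_sqrt
    (Finset.single_le_sum (f := fun j => ‖x j‖ ^ 2) (fun j _ => by positivity)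
      (Finset.mem_univ i))

lemma key {n m : ℕ} (h : Fin m → EuclideanSpace ℝ (Fin n))
    (y : EuclideanSpace ℝ (Fin n)) (t : ℝ) :
    ∀ i : Fin m, gso (augCols h y t) i.castSucc = augLI n (gso h i) := by
  suffices H : ∀ k : ℕ, ∀ i : Fin m, (i : ℕ) = k →
      gso (augCols h y t) i.castSucc = augLI n (gso h i) by
    intro i; exact H i i rfl
  intro k
  induction k using Nat.strongRecOn with
  | ind k IH =>
    intro i hik
    have IH' : ∀ j : Fin m, j < i → gso (augCols h y t) j.castSucc = augLI n (gso h j) := by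
      intro j hj
      exact IH j (hik ▸ hj) j rfl
    rw [gso_def (augCols h y t) i.castSucc, gso_def h i]
    rw [map_sub, map_sum]
    congr 1
    · simp [augCols, Fin.snoc_castSucc, augLI_apply]
    · rw [Fin.Iio_castSucc, Finset.sum_map]
      apply Finset.sum_congr rfl
      intro j hj
      rw [Finset.mem_Iio] at hj
      have hgj : gso (augCols h y t) (Fin.castSuccEmb j) = augLI n (gso h j) :=
        IH' j hj
      rw [Submodule.starProjection_singleton, Submodule.starProjection_singleton, hgj]
      have hcol : augCols h y t i.castSucc = augLI n (h i) := by
        simp [augCols, Fin.snoc_castSucc, augLI_apply]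
      rw [hcol, (augLI n).inner_map_map, (augLI n).norm_map, map_smul]

end S11aux

/-- the Gram-Schmidt vectors of the augmented matrix are
`(h_i*, 0)` for `i ≤ m`; the last one has last coordinate `t` (so its norm is `≥ t`),
and consequently `a(H̃) ≥ min(t, a(H))`. -/
theorem statement11 {n m : ℕ} (hm : 0 < m)
    (h : Fin m → EuclideanSpace ℝ (Fin n)) (hli : LinearIndependent ℝ h)
    (y : EuclideanSpace ℝ (Fin n)) (t : ℝ) (ht : 0 < t) :
    (∀ i : Fin m, gso (augCols h y t) i.castSucc = aug (gso h i) 0) ∧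
      (WithLp.equiv 2 (Fin (n + 1) → ℝ)) (gso (augCols h y t) (Fin.last m)) (Fin.last n) = t ∧
      t ≤ ‖gso (augCols h y t) (Fin.last m)‖ ∧
      min t (aMin h) ≤ aMin (augCols h y t) := by
  have key := S11aux.key h y t
  have hcoord : (gso (augCols h y t) (Fin.last m)) (Fin.last n) = t := by
    rw [S11aux.gso_def (augCols h y t) (Fin.last m)]
    rw [PiLp.sub_apply, S11aux.sum_apply]
    have h1 : augCols h y t (Fin.last m) (Fin.last n) = t := by
      simp [augCols, Fin.snoc_last, S11aux.aug_apply_last]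
    rw [h1]
    have h2 : ∀ j ∈ Finset.Iio (Fin.last m),
        (((ℝ ∙ gso (augCols h y t) j).starProjection
          (augCols h y t (Fin.last m)) : EuclideanSpace ℝ (Fin (n+1)))) (Fin.last n) = 0 := by
      intro j hj
      rw [Finset.mem_Iio, Fin.lt_last_iff_ne_last] at hj
      obtain ⟨j', rfl⟩ := Fin.exists_castSucc_eq.2 hj
      rw [Submodule.starProjection_singleton]
      have := key j'
      rw [PiLp.smul_apply]
      show _ • (gso (augCols h y t) j'.castSucc) (Fin.last n) = 0
      rw [this, S11aux.augLI_apply, S11aux.aug_apply_last]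
      simp
    rw [Finset.sum_congr rfl h2]
    simp
  refine ⟨fun i => key i, hcoord, ?_, ?_⟩
  · have habs := S11aux.abs_apply_le_norm (gso (augCols h y t) (Fin.last m)) (Fin.last n)
    rw [hcoord] at habs
    exact (le_abs_self t).trans habs
  · haveI : Nonempty (Fin m) := ⟨⟨0, hm⟩⟩
    apply le_ciInf
    intro i
    induction i using Fin.lastCases with
    | last =>
      refine (min_le_left _ _).trans ?_
      have habs := S11aux.abs_apply_le_norm (gso (augCols h y t) (Fin.last m)) (Fin.last n)
      rw [hcoord] at habs
      exact (le_abs_self t).trans habs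
    | cast i =>
      refine (min_le_right _ _).trans ?_
      rw [key i, (S11aux.augLI n).norm_map]
      exact ciInf_le ⟨0, fun x ⟨j, hj⟩ => hj ▸ norm_nonneg _⟩ i
end

section
/- Let h_1, …, h_m be linearly independent vectors in ℝ^n with Gram–Schmidt vectors h_1*, …, h_m* and coefficients μ_{i,j}, let δ ≤ 1, and suppose the Lovász condition fails at index k, i.e. ‖h_k* + μ_{k,k−1} h_{k−1}*‖² < δ ‖h_{k−1}*‖². Let h′_1, …, h′_m be the basis obtained by swapping h_{k−1} and h_k, with Gram–Schmidt vectors h′_i*. Then min_{1≤i≤m} ‖h′_i*‖ ≥ min_{1≤i≤m} ‖h_i*‖; that is, a swap step of the LLL algorithm does not decrease the minimum Gram–Schmidt norm. -/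
open scoped BigOperators

open scoped RealInnerProductSpace
open Submodule Set
open InnerProductSpace


instance finWFLT (m : ℕ) : WellFoundedLT (Fin m) := inferInstance

variable {E : Type*} [NormedAddCommGroup E] [InnerProductSpace ℝ E] {m : ℕ}

lemma inner_span_zero {S : Set E} {v : E} (hv : ∀ s ∈ S, ⟪s, v⟫ = 0) :
    ∀ u ∈ span ℝ S, ⟪u, v⟫ = 0 := by
  intro u hu
  have hle : span ℝ S ≤ (ℝ ∙ v)ᗮ :=
    Submodule.span_le.2 fun s hs => Submodule.mem_orthogonal_singleton_iff_inner_left.2 (hv s hs)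
  exact Submodule.mem_orthogonal_singleton_iff_inner_left.1 (hle hu)

lemma proj_mem (f : Fin m → E) {i j : Fin m} (hj : j < i) (x : E) :
    (orthogonalProjection (ℝ ∙ gramSchmidt ℝ f j) x : E) ∈ span ℝ (f '' Set.Iio i) := by
  have h1 : gramSchmidt ℝ f j ∈ span ℝ (f '' Set.Iio i) :=
    span_mono (image_mono fun y hy => lt_of_le_of_lt hy hj) (gramSchmidt_mem_span ℝ f le_rfl)
  exact (Submodule.span_singleton_le_iff_mem _ _).2 h1 (SetLike.coe_mem _)

lemma sub_gramSchmidt_mem (f : Fin m → E) (i : Fin m) :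
    f i - gramSchmidt ℝ f i ∈ span ℝ (f '' Set.Iio i) := by
  rw [gramSchmidt_def ℝ f i, sub_sub_cancel]
  exact Submodule.sum_mem _ fun j hj => proj_mem f (Finset.mem_Iio.1 hj) _

lemma gramSchmidt_orth_span (f : Fin m → E) (i : Fin m) :
    ∀ u ∈ span ℝ (f '' Set.Iio i), ⟪u, gramSchmidt ℝ f i⟫ = 0 := by
  rw [← span_gramSchmidt_Iio ℝ f i]
  refine inner_span_zero fun s hs => ?_
  obtain ⟨j, hj, rfl⟩ := hs
  exact gramSchmidt_orthogonal ℝ f (ne_of_lt hj)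

/-- uniqueness characterization of the Gram-Schmidt vector -/
lemma gramSchmidt_eq_of (f : Fin m → E) (i : Fin m) (v : E)
    (h1 : f i - v ∈ span ℝ (f '' Set.Iio i))
    (h2 : ∀ u ∈ span ℝ (f '' Set.Iio i), ⟪u, v⟫ = 0) :
    gramSchmidt ℝ f i = v := by
  set d := gramSchmidt ℝ f i - v with hd
  have hdmem : d ∈ span ℝ (f '' Set.Iio i) := by
    have hde : d = (f i - v) - (f i - gramSchmidt ℝ f i) := by rw [hd]; abel
    rw [hde]
    exact Submodule.sub_mem _ h1 (sub_gramSchmidt_mem f i)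
  have hz : ⟪d, d⟫ = 0 := by
    have e1 : ⟪d, gramSchmidt ℝ f i⟫ = 0 := gramSchmidt_orth_span f i d hdmem
    have e2 : ⟪d, v⟫ = 0 := h2 d hdmem
    rw [hd, inner_sub_right] at *
    rw [e1, e2]; ring
  have h0 := inner_self_eq_zero.1 hz
  rwa [sub_eq_zero] at h0


lemma my_le_of_sq_le {a b : ℝ} (ha : 0 ≤ a) (hb : 0 ≤ b) (h : a ^ 2 ≤ b ^ 2) : a ≤ b := by
  nlinarith

set_option maxHeartbeats 1000000 in
/-- a swap step of the LLL algorithm (performed when the Lovász condition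
fails at index `k`) does not decrease the minimum Gram-Schmidt norm. -/
theorem statement13 {n m : ℕ}
    (h : Fin m → EuclideanSpace ℝ (Fin n)) (hli : LinearIndependent ℝ h)
    (δ : ℝ) (hδ : δ ≤ 1)
    (k k' : Fin m) (hkk' : (k' : ℕ) + 1 = (k : ℕ))
    (hfail : ‖gso h k + mu h k k' • gso h k'‖ ^ 2 < δ * ‖gso h k'‖ ^ 2) :
    aMin h ≤ aMin (h ∘ Equiv.swap k' k) := by
  classical
  have gso_def : ∀ f : Fin m → EuclideanSpace ℝ (Fin n), gso f = gramSchmidt ℝ f := fun _ => rfl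
  have hk'k : k' < k := by rw [Fin.lt_def]; omega
  have hne : k' ≠ k := ne_of_lt hk'k
  set σ : Equiv.Perm (Fin m) := Equiv.swap k' k with hσ
  set u : EuclideanSpace ℝ (Fin n) := gso h k' with hudef
  set v : EuclideanSpace ℝ (Fin n) := gso h k with hvdef
  set μ : ℝ := mu h k k' with hμdef
  set w : EuclideanSpace ℝ (Fin n) := v + μ • u with hwdef
  have hu0 : u ≠ 0 := by rw [hudef, gso_def]; exact gramSchmidt_ne_zero k' hli
  have hv0 : v ≠ 0 := by rw [hvdef, gso_def]; exact gramSchmidt_ne_zero k hli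
  have hun : (0:ℝ) < ‖u‖ ^ 2 := pow_pos (norm_pos_iff.2 hu0) 2
  have hvn : (0:ℝ) < ‖v‖ ^ 2 := pow_pos (norm_pos_iff.2 hv0) 2
  have horthvu : ⟪v, u⟫ = 0 := by
    rw [hvdef, hudef, gso_def]; exact gramSchmidt_orthogonal ℝ h hne.symm
  have hμ : ⟪h k, u⟫ = μ * ‖u‖ ^ 2 := by
    rw [hμdef, mu, ← hudef]
    field_simp
  have hw2 : ‖w‖ ^ 2 = ‖v‖ ^ 2 + μ ^ 2 * ‖u‖ ^ 2 := by
    rw [hwdef, norm_add_sq_real, inner_smul_right, horthvu, norm_smul,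
      Real.norm_eq_abs, mul_pow, sq_abs]
    ring
  have hwpos : (0:ℝ) < ‖w‖ ^ 2 := by rw [hw2]; nlinarith [sq_nonneg μ, sq_nonneg ‖u‖]
  have hw0 : w ≠ 0 := by
    intro hc; rw [hc] at hwpos; simp at hwpos
  have hwu : ‖w‖ ^ 2 ≤ ‖u‖ ^ 2 := by
    have : ‖w‖ ^ 2 < δ * ‖u‖ ^ 2 := hfail
    nlinarith
  -- σ fixes everything except k', k
  have hσfix : ∀ j : Fin m, j ≠ k' → j ≠ k → σ j = j := fun j hj1 hj2 =>
    Equiv.swap_apply_of_ne_of_ne hj1 hj2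
  have hσk' : σ k' = k := Equiv.swap_apply_left _ _
  have hσk : σ k = k' := Equiv.swap_apply_right _ _
  -- image facts
  have im_le : ∀ i : Fin m, i ≤ k' → (h ∘ σ) '' Set.Iio i = h '' Set.Iio i := by
    intro i hi
    refine Set.image_congr fun j hj => ?_
    have hj1 : j ≠ k' := ne_of_lt (lt_of_lt_of_le hj hi)
    have hj2 : j ≠ k := ne_of_lt (lt_of_lt_of_le hj (hi.trans hk'k.le))
    simp [Function.comp, hσfix j hj1 hj2]
  have iio_k : Set.Iio k = insert k' (Set.Iio k') := by
    ext j; simp only [Set.mem_Iio, Set.mem_insert_iff, Fin.lt_def]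
    constructor
    · intro hj
      rcases Nat.lt_or_ge (j:ℕ) (k':ℕ) with h1 | h1
      · right; exact h1
      · left; exact Fin.ext (by omega)
    · rintro (rfl | hj) <;> omega
  have im_k : (h ∘ σ) '' Set.Iio k = insert (h k) (h '' Set.Iio k') := by
    rw [iio_k, Set.image_insert_eq, im_le k' le_rfl]
    simp [Function.comp, hσk']
  have im_gt : ∀ i : Fin m, k < i → (h ∘ σ) '' Set.Iio i = h '' Set.Iio i := by
    intro i hi
    have hσim : σ '' Set.Iio i = Set.Iio i := by
      ext x
      simp only [Set.mem_image, Set.mem_Iio]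
      constructor
      · rintro ⟨j, hj, rfl⟩
        by_cases h1 : j = k'
        · subst h1; rw [hσk']; exact hi
        by_cases h2 : j = k
        · subst h2; rw [hσk]; exact hk'k.trans hi
        · rw [hσfix j h1 h2]; exact hj
      · intro hx
        refine ⟨σ x, ?_, Equiv.swap_apply_self _ _ _⟩
        by_cases h1 : x = k'
        · subst h1; rw [hσk']; exact hi
        by_cases h2 : x = k
        · subst h2; rw [hσk]; exact hk'k.trans hi
        · rw [hσfix x h1 h2]; exact hx
    rw [Set.image_comp, hσim]
  -- key decomposition: h k - w ∈ span (h '' Iio k')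
  have finiio_k : Finset.Iio k = insert k' (Finset.Iio k') := by
    ext j; simp only [Finset.mem_Iio, Finset.mem_insert, Fin.lt_def]
    constructor
    · intro hj
      rcases Nat.lt_or_ge (j:ℕ) (k':ℕ) with h1 | h1
      · right; exact h1
      · left; exact Fin.ext (by omega)
    · rintro (rfl | hj) <;> omega
  have hz : h k - w ∈ span ℝ (h '' Set.Iio k') := by
    have hde : h k - v = ∑ j ∈ Finset.Iio k,
        (ℝ ∙ gramSchmidt ℝ h j).starProjection (h k) := by
      conv_lhs => rw [hvdef, gso_def, gramSchmidt_def ℝ h k]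
      abel
    have hprojk' : (ℝ ∙ gramSchmidt ℝ h k').starProjection (h k) = μ • u := by
      rw [starProjection_singleton, ← gso_def, ← hudef]
      have : ⟪u, h k⟫ = μ * ‖u‖ ^ 2 := by rw [real_inner_comm]; exact hμ
      rw [this]
      rw [RCLike.ofReal_real_eq_id, id_eq]
      rw [mul_div_assoc, div_self (ne_of_gt hun), mul_one]
    have hsum : h k - w = ∑ j ∈ Finset.Iio k',
        (ℝ ∙ gramSchmidt ℝ h j).starProjection (h k) := by
      have : h k - w = (h k - v) - μ • u := by rw [hwdef]; abel
      rw [this, hde, finiio_k, Finset.sum_insert (by simp), hprojk']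
      abel
    rw [hsum]
    exact Submodule.sum_mem _ fun j hj => proj_mem h (Finset.mem_Iio.1 hj) _
  -- w orthogonal to span (h '' Iio k')
  have horthw : ∀ y ∈ span ℝ (h '' Set.Iio k'), ⟪y, w⟫ = 0 := by
    rw [← span_gramSchmidt_Iio ℝ h k']
    refine inner_span_zero fun s hs => ?_
    obtain ⟨j, hj, rfl⟩ := hs
    rw [hwdef, inner_add_right, inner_smul_right, ← gso_def]
    have e1 : ⟪gramSchmidt ℝ h j, v⟫ = 0 := by
      rw [hvdef, gso_def]; exact gramSchmidt_orthogonal ℝ h (ne_of_lt (hj.trans hk'k))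
    have e2 : ⟪gramSchmidt ℝ h j, u⟫ = 0 := by
      rw [hudef, gso_def]; exact gramSchmidt_orthogonal ℝ h (ne_of_lt hj)
    rw [gso_def, e1, e2]; ring
  have horthu : ∀ y ∈ span ℝ (h '' Set.Iio k'), ⟪y, u⟫ = 0 := by
    rw [hudef, gso_def]; exact gramSchmidt_orth_span h k'
  -- step 0
  have step0 : ∀ i : Fin m, i < k' ∨ k < i → gso (h ∘ σ) i = gso h i := by
    intro i hi
    rw [gso_def, gso_def]
    have him : (h ∘ σ) '' Set.Iio i = h '' Set.Iio i := by
      rcases hi with hi | hi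
      · exact im_le i hi.le
      · exact im_gt i hi
    have hfi : (h ∘ σ) i = h i := by
      rcases hi with hi | hi
      · simp [Function.comp, hσfix i (ne_of_lt hi) (ne_of_lt (hi.trans hk'k))]
      · simp [Function.comp, hσfix i (ne_of_gt (hk'k.trans hi)) (ne_of_gt hi)]
    refine gramSchmidt_eq_of _ i _ ?_ ?_
    · rw [him, hfi]; exact sub_gramSchmidt_mem h i
    · rw [him]; exact gramSchmidt_orth_span h i
  -- step 1
  have step1 : gso (h ∘ σ) k' = w := by
    rw [gso_def]
    refine gramSchmidt_eq_of _ k' _ ?_ ?_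
    · rw [im_le k' le_rfl]
      have : (h ∘ σ) k' = h k := by simp [Function.comp, hσk']
      rw [this]; exact hz
    · rw [im_le k' le_rfl]; exact horthw
  -- step 2
  set c : ℝ := μ * ‖u‖ ^ 2 / ‖w‖ ^ 2 with hcdef
  have hinnerhkw : ⟪h k, w⟫ = ‖w‖ ^ 2 := by
    have hdecomp : h k = (h k - w) + w := by abel
    rw [hdecomp, inner_add_left, horthw _ hz, real_inner_self_eq_norm_sq]
    ring
  have hinnerhku : ⟪h k, u⟫ = μ * ‖u‖ ^ 2 := hμ
  have step2 : gso (h ∘ σ) k = u - c • w := by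
    rw [gso_def]
    refine gramSchmidt_eq_of _ k _ ?_ ?_
    · rw [im_k]
      have hfk : (h ∘ σ) k = h k' := by simp [Function.comp, hσk]
      have he : (h ∘ σ) k - (u - c • w) = (h k' - u) + c • w := by rw [hfk]; abel
      rw [he]
      refine Submodule.add_mem _ ?_ ?_
      · exact span_mono (Set.subset_insert _ _) (hudef ▸ gso_def h ▸ sub_gramSchmidt_mem h k')
      · refine Submodule.smul_mem _ _ ?_
        have hw_mem : w ∈ span ℝ (insert (h k) (h '' Set.Iio k')) := by
          have : w = h k - (h k - w) := by abel
          rw [this]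
          exact Submodule.sub_mem _ (subset_span (Set.mem_insert _ _))
            (span_mono (Set.subset_insert _ _) hz)
        exact hw_mem
    · rw [im_k]
      refine inner_span_zero fun s hs => ?_
      rcases hs with rfl | ⟨j, hj, rfl⟩
      · rw [inner_sub_right, inner_smul_right, hinnerhku, hinnerhkw, hcdef]
        field_simp
        ring
      · have hjm : h j ∈ span ℝ (h '' Set.Iio k') := subset_span ⟨j, hj, rfl⟩
        rw [inner_sub_right, inner_smul_right, horthu _ hjm, horthw _ hjm]
        ring
  -- norm bounds
  have n1 : ‖v‖ ≤ ‖w‖ := by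
    have h2 : ‖v‖ ^ 2 ≤ ‖w‖ ^ 2 := by rw [hw2]; nlinarith [sq_nonneg μ, sq_nonneg ‖u‖]
    exact my_le_of_sq_le (norm_nonneg v) (norm_nonneg w) h2
  have hinneruw : ⟪u, w⟫ = μ * ‖u‖ ^ 2 := by
    have huv : ⟪u, v⟫ = 0 := by rw [real_inner_comm]; exact horthvu
    rw [hwdef, inner_add_right, inner_smul_right, huv, real_inner_self_eq_norm_sq]
    ring
  have n2 : ‖v‖ ≤ ‖u - c • w‖ := by
    have hexp : ‖u - c • w‖ ^ 2 = ‖u‖ ^ 2 - 2 * (c * (μ * ‖u‖ ^ 2)) + c ^ 2 * ‖w‖ ^ 2 := by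
      rw [norm_sub_sq_real, inner_smul_right, hinneruw, norm_smul,
        Real.norm_eq_abs, mul_pow, sq_abs]
    have h2 : ‖v‖ ^ 2 ≤ ‖u - c • w‖ ^ 2 := by
      rw [hexp]
      have hc : c * ‖w‖ ^ 2 = μ * ‖u‖ ^ 2 := by
        rw [hcdef]; field_simp
      have h3 : ‖v‖ ^ 2 * ‖w‖ ^ 2 ≤
          (‖u‖ ^ 2 - 2 * (c * (μ * ‖u‖ ^ 2)) + c ^ 2 * ‖w‖ ^ 2) * ‖w‖ ^ 2 := by
        nlinarith [hc, hw2, hwu, hvn, hun, hwpos, sq_nonneg μ, sq_nonneg (μ * ‖u‖)]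
      exact (mul_le_mul_iff_of_pos_right hwpos).1 h3
    exact my_le_of_sq_le (norm_nonneg v) (norm_nonneg (u - c • w)) h2
  -- assemble
  have hbdd : BddBelow (Set.range fun i : Fin m => ‖gso h i‖) := by
    refine ⟨0, ?_⟩; rintro x ⟨i, rfl⟩; exact norm_nonneg _
  have hmin : ∀ i : Fin m, aMin h ≤ ‖gso h i‖ := fun i => ciInf_le hbdd i
  haveI : Nonempty (Fin m) := ⟨k⟩
  refine le_ciInf fun i => ?_
  by_cases hik' : i = k'
  · rw [hik', step1]
    exact (hmin k).trans n1
  by_cases hik : i = k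
  · rw [hik, step2]
    exact (hmin k).trans n2
  · have : i < k' ∨ k < i := by
      have h1 : (i : ℕ) ≠ (k' : ℕ) := fun hc => hik' (Fin.ext hc)
      have h2 : (i : ℕ) ≠ (k : ℕ) := fun hc => hik (Fin.ext hc)
      rw [Fin.lt_def, Fin.lt_def]
      omega
    rw [step0 i this]
    exact hmin i
end
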